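/- For fixed z,w in the closed right half-plane with z ≠ w, the limit lim_{s→0⁺} (K_s(z,w) - 1)/s = log(2/(|z-w| + |z-w*|)), where w* = -conj(w). -/

import Mathlib

open Real

/-- The rotation-averaged Riesz `s`-kernel on the right half-plane:
`K_s(z,w) = (1/2π) ∫₀^{2π} (x² + u² - 2xu cos φ + (y-v)²)^{-s/2} dφ`,
where `z = x + iy`, `w = u + iv`. -/
noncomputable def rotKernel (s : ℝ) (z w : ℂ) : ℝ :=
  (1 / (2 * Real.pi)) * ∫ φ in (0:ℝ)..(2 * Real.pi),
    (z.re ^ 2 + w.re ^ 2 - 2 * z.re * w.re * Real.cos φ + (z.im - w.im) ^ 2) ^ (-(s / 2))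

open Filter

lemma quad_pos {r : ℝ} (h : |r| < 1) (φ : ℝ) : 0 < 1 - 2*r*Real.cos φ + r^2 := by
  nlinarith [Real.abs_cos_le_one φ, abs_mul r (Real.cos φ), le_abs_self (r * Real.cos φ),
    abs_nonneg r, sq_abs r, sq_nonneg (1 - |r|)]

lemma cont_quad (r : ℝ) (h : |r| < 1) :
    Continuous fun φ => Real.log (1 - 2*r*Real.cos φ + r^2) := by
  apply Continuous.log (by continuity)
  exact fun φ => ne_of_gt (quad_pos h φ)

lemma periodic_quad (r : ℝ) :
    Function.Periodic (fun φ => Real.log (1 - 2*r*Real.cos φ + r^2)) (2*Real.pi) := by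
  intro x; simp [Real.cos_add_two_pi]

/-- `J(-r) = J(r)`. -/
lemma J_neg (r : ℝ) (h : |r| < 1) :
    (∫ φ in (0:ℝ)..(2*Real.pi), Real.log (1 - 2*(-r)*Real.cos φ + (-r)^2))
      = ∫ φ in (0:ℝ)..(2*Real.pi), Real.log (1 - 2*r*Real.cos φ + r^2) := by
  have h1 : ∀ φ : ℝ, Real.log (1 - 2*(-r)*Real.cos φ + (-r)^2)
      = Real.log (1 - 2*r*Real.cos (φ + Real.pi) + r^2) := by
    intro φ; rw [Real.cos_add_pi]; ring_nf
  calc (∫ φ in (0:ℝ)..(2*Real.pi), Real.log (1 - 2*(-r)*Real.cos φ + (-r)^2))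
      = ∫ φ in (0:ℝ)..(2*Real.pi), Real.log (1 - 2*r*Real.cos (φ + Real.pi) + r^2) := by
        simp_rw [h1]
    _ = ∫ φ in (0+Real.pi:ℝ)..(2*Real.pi+Real.pi),
          Real.log (1 - 2*r*Real.cos φ + r^2) :=
        intervalIntegral.integral_comp_add_right (fun φ => Real.log (1 - 2*r*Real.cos φ + r^2)) Real.pi
    _ = ∫ φ in (0:ℝ)..(2*Real.pi), Real.log (1 - 2*r*Real.cos φ + r^2) := by
        have := (periodic_quad r).intervalIntegral_add_eq Real.pi 0
        rw [zero_add] at this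
        rw [show (0:ℝ) + Real.pi = Real.pi by ring,
          show 2*Real.pi + Real.pi = Real.pi + 2*Real.pi by ring, this]

/-- Doubling: `2 J(r) = J(r²)`. -/
lemma J_double (r : ℝ) (h : |r| < 1) :
    2 * (∫ φ in (0:ℝ)..(2*Real.pi), Real.log (1 - 2*r*Real.cos φ + r^2))
      = ∫ φ in (0:ℝ)..(2*Real.pi), Real.log (1 - 2*r^2*Real.cos φ + (r^2)^2) := by
  have h2 : |r^2| < 1 := by rw [abs_pow]; nlinarith [abs_nonneg r]
  have key : ∀ φ : ℝ, Real.log (1 - 2*r*Real.cos φ + r^2)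
      + Real.log (1 - 2*(-r)*Real.cos φ + (-r)^2)
      = Real.log (1 - 2*r^2*Real.cos (2*φ) + (r^2)^2) := by
    intro φ
    rw [← Real.log_mul (ne_of_gt (quad_pos h φ)) (ne_of_gt (quad_pos (by rwa [abs_neg]) φ))]
    congr 1
    have := Real.cos_two_mul φ
    nlinarith [this]
  have int1 : IntervalIntegrable (fun φ => Real.log (1 - 2*r*Real.cos φ + r^2))
      MeasureTheory.volume 0 (2*Real.pi) := (cont_quad r h).intervalIntegrable _ _
  have int2 : IntervalIntegrable (fun φ => Real.log (1 - 2*(-r)*Real.cos φ + (-r)^2))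
      MeasureTheory.volume 0 (2*Real.pi) := (cont_quad (-r) (by rwa [abs_neg])).intervalIntegrable _ _
  have lhs : 2 * (∫ φ in (0:ℝ)..(2*Real.pi), Real.log (1 - 2*r*Real.cos φ + r^2))
      = ∫ φ in (0:ℝ)..(2*Real.pi), Real.log (1 - 2*r^2*Real.cos (2*φ) + (r^2)^2) := by
    rw [two_mul]
    nth_rewrite 2 [← J_neg r h]
    rw [← intervalIntegral.integral_add int1 int2]
    simp_rw [key]
  rw [lhs]
  have := intervalIntegral.integral_comp_mul_left
    (a := (0:ℝ)) (b := 2*Real.pi)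
    (fun φ => Real.log (1 - 2*r^2*Real.cos φ + (r^2)^2)) (c := 2) two_ne_zero
  rw [this]
  have int3 : IntervalIntegrable (fun φ => Real.log (1 - 2*r^2*Real.cos φ + (r^2)^2))
      MeasureTheory.volume 0 (2*Real.pi) := (cont_quad _ h2).intervalIntegrable _ _
  have int4 : IntervalIntegrable (fun φ => Real.log (1 - 2*r^2*Real.cos φ + (r^2)^2))
      MeasureTheory.volume (2*Real.pi) (2*(2*Real.pi)) := by
    apply Continuous.intervalIntegrable (cont_quad _ h2)
  have split : (∫ φ in (0:ℝ)..(2*(2*Real.pi)), Real.log (1 - 2*r^2*Real.cos φ + (r^2)^2))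
      = (∫ φ in (0:ℝ)..(2*Real.pi), Real.log (1 - 2*r^2*Real.cos φ + (r^2)^2))
        + ∫ φ in (2*Real.pi:ℝ)..(2*(2*Real.pi)), Real.log (1 - 2*r^2*Real.cos φ + (r^2)^2) :=
    (intervalIntegral.integral_add_adjacent_intervals int3 int4).symm
  have per : (∫ φ in (2*Real.pi:ℝ)..(2*(2*Real.pi)), Real.log (1 - 2*r^2*Real.cos φ + (r^2)^2))
      = ∫ φ in (0:ℝ)..(2*Real.pi), Real.log (1 - 2*r^2*Real.cos φ + (r^2)^2) := by
    have := (periodic_quad (r^2)).intervalIntegral_add_eq (2*Real.pi) 0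
    rw [zero_add] at this
    rw [show 2*(2*Real.pi) = 2*Real.pi + 2*Real.pi by ring, this]
  rw [mul_zero, split, per]
  simp only [smul_eq_mul]
  ring

/-- Uniform bound on `|J(s)|` for `0 ≤ s ≤ r < 1`. -/
lemma J_bound {r s : ℝ} (hs0 : 0 ≤ s) (hsr : s ≤ r) (hr : r < 1) :
    |∫ φ in (0:ℝ)..(2*Real.pi), Real.log (1 - 2*s*Real.cos φ + s^2)|
      ≤ (max (-Real.log ((1-r)^2)) (Real.log 4)) * (2*Real.pi) := by
  set M := max (-Real.log ((1-r)^2)) (Real.log 4) with hM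
  have hs1 : |s| < 1 := by rw [abs_of_nonneg hs0]; linarith
  have hbd : ∀ φ ∈ Set.uIoc (0:ℝ) (2*Real.pi), ‖Real.log (1 - 2*s*Real.cos φ + s^2)‖ ≤ M := by
    intro φ _
    have hpos := quad_pos hs1 φ
    have hub : 1 - 2*s*Real.cos φ + s^2 ≤ 4 := by
      nlinarith [Real.neg_one_le_cos φ, sq_nonneg (1+s)]
    have hlb : (1-r)^2 ≤ 1 - 2*s*Real.cos φ + s^2 := by
      nlinarith [Real.cos_le_one φ, sq_nonneg (1-s)]
    have h1 : Real.log (1 - 2*s*Real.cos φ + s^2) ≤ Real.log 4 :=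
      Real.log_le_log hpos hub
    have h2 : Real.log ((1-r)^2) ≤ Real.log (1 - 2*s*Real.cos φ + s^2) :=
      Real.log_le_log (by nlinarith) hlb
    rw [Real.norm_eq_abs, abs_le]
    constructor
    · have : -M ≤ Real.log ((1-r)^2) := by
        have : -Real.log ((1-r)^2) ≤ M := le_max_left _ _
        linarith
      linarith
    · exact le_trans h1 (le_max_right _ _)
  have := intervalIntegral.norm_integral_le_of_norm_le_const hbd
  rw [Real.norm_eq_abs] at this
  calc |∫ φ in (0:ℝ)..(2*Real.pi), Real.log (1 - 2*s*Real.cos φ + s^2)|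
      ≤ M * |2*Real.pi - 0| := this
    _ = M * (2*Real.pi) := by rw [sub_zero, abs_of_nonneg (by positivity)]

/-- The classical fact: the circle average of `log(1 - 2r cos φ + r²)` vanishes for `0 ≤ r < 1`. -/
lemma J_eq_zero {r : ℝ} (hr0 : 0 ≤ r) (hr1 : r < 1) :
    (∫ φ in (0:ℝ)..(2*Real.pi), Real.log (1 - 2*r*Real.cos φ + r^2)) = 0 := by
  set J : ℝ → ℝ := fun s => ∫ φ in (0:ℝ)..(2*Real.pi), Real.log (1 - 2*s*Real.cos φ + s^2)
    with hJ
  have key : ∀ n : ℕ, J (r^(2^n)) = 2^n * J r := by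
    intro n
    induction n with
    | zero => simp
    | succ n ih =>
      have habs : |r^(2^n)| < 1 := by
        rw [abs_of_nonneg (pow_nonneg hr0 _)]
        exact pow_lt_one₀ hr0 hr1 (by positivity)
      have h2 : J ((r^(2^n))^2) = 2 * J (r^(2^n)) := (J_double _ habs).symm
      have hpow : (r^(2^n))^2 = r^(2^(n+1)) := by
        rw [← pow_mul]; ring_nf
      rw [hpow] at h2
      rw [h2, ih]; ring
  set M := max (-Real.log ((1-r)^2)) (Real.log 4) with hM
  have hJr : ∀ n : ℕ, |J r| ≤ M * (2*Real.pi) / 2^n := by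
    intro n
    have hle : r^(2^n) ≤ r := by
      rcases eq_or_lt_of_le hr0 with h|h
      · rw [← h]; simp [zero_pow (by positivity : (2:ℕ)^n ≠ 0)]
      · exact pow_le_of_le_one hr0 (le_of_lt hr1) (by positivity)
    have hb : |J (r^(2^n))| ≤ M * (2*Real.pi) :=
      J_bound (pow_nonneg hr0 (2^n)) hle hr1
    rw [key n, abs_mul, abs_pow, abs_two] at hb
    rw [le_div_iff₀ (by positivity : (0:ℝ) < 2^n)]
    calc |J r| * 2^n = (2:ℝ)^n * |J r| := by ring
      _ ≤ M * (2*Real.pi) := hb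
  have htend : Tendsto (fun n : ℕ => M * (2*Real.pi) / 2^n) atTop (nhds 0) := by
    have : Tendsto (fun n : ℕ => ((2:ℝ)⁻¹)^n) atTop (nhds 0) := by
      apply tendsto_pow_atTop_nhds_zero_of_lt_one <;> norm_num
    have := this.const_mul (M * (2*Real.pi))
    rw [mul_zero] at this
    convert this using 2 with n
    rw [div_eq_mul_inv, inv_pow]
  have : |J r| ≤ 0 := ge_of_tendsto' htend hJr
  have := abs_nonneg (J r)
  have : |J r| = 0 := le_antisymm ‹|J r| ≤ 0› ‹0 ≤ |J r|›
  exact abs_eq_zero.mp this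

/-- Closed form for the log integral. -/
lemma logInt (a b : ℝ) (ha : 0 < a) (hab : a ≤ b) :
    (∫ φ in (0:ℝ)..(2*Real.pi),
        Real.log ((a^2+b^2)/2 - (b^2-a^2)/2 * Real.cos φ))
      = 4*Real.pi*Real.log ((a+b)/2) := by
  set p := (a+b)/2 with hp
  set q := (b-a)/2 with hq
  have hppos : 0 < p := by rw [hp]; linarith
  set r := q/p with hr
  have hr0 : 0 ≤ r := by
    apply div_nonneg _ (le_of_lt hppos); rw [hq]; linarith
  have hr1 : r < 1 := by
    rw [hr, div_lt_one hppos, hq, hp]; linarith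
  have habs : |r| < 1 := by rw [abs_of_nonneg hr0]; exact hr1
  have key : ∀ φ : ℝ, (a^2+b^2)/2 - (b^2-a^2)/2 * Real.cos φ
      = p^2 * (1 - 2*r*Real.cos φ + r^2) := by
    intro φ
    have hpr : p * r = q := by rw [hr]; field_simp
    have ha' : a = p - q := by rw [hp, hq]; ring
    have hb' : b = p + q := by rw [hp, hq]; ring
    rw [ha', hb', ← hpr]
    ring
  have hlog : ∀ φ : ℝ, Real.log ((a^2+b^2)/2 - (b^2-a^2)/2 * Real.cos φ)
      = Real.log (p^2) + Real.log (1 - 2*r*Real.cos φ + r^2) := by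
    intro φ
    rw [key φ, Real.log_mul (by positivity) (ne_of_gt (quad_pos habs φ))]
  simp_rw [hlog]
  have int2 : IntervalIntegrable (fun φ => Real.log (1 - 2*r*Real.cos φ + r^2))
      MeasureTheory.volume 0 (2*Real.pi) := by
    apply Continuous.intervalIntegrable
    apply Continuous.log (by continuity)
    exact fun φ => ne_of_gt (quad_pos habs φ)
  rw [intervalIntegral.integral_add (intervalIntegrable_const) int2,
    J_eq_zero hr0 hr1, intervalIntegral.integral_const]
  rw [Real.log_pow]
  simp only [smul_eq_mul, add_zero, sub_zero]
  push_cast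
  ring

/-- slope limit: `(exp(s u) - 1)/s → u` as `s → 0⁺`. -/
lemma exp_slope_tendsto (u : ℝ) :
    Tendsto (fun s : ℝ => (Real.exp (s * u) - 1) / s) (nhdsWithin 0 (Set.Ioi 0)) (nhds u) := by
  have h1 : HasDerivAt (fun s : ℝ => Real.exp (s * u)) u 0 := by
    have := (Real.hasDerivAt_exp (0 * u)).comp 0 (hasDerivAt_mul_const u)
    simpa [Function.comp_def] using this
  have h2 := hasDerivAt_iff_tendsto_slope.mp h1
  have h3 : Tendsto (slope (fun s : ℝ => Real.exp (s * u)) 0)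
      (nhdsWithin 0 (Set.Ioi 0)) (nhds u) :=
    h2.mono_left (nhdsWithin_mono 0 (fun x hx => ne_of_gt hx))
  apply h3.congr
  intro s
  rw [slope_def_field]
  simp [div_eq_mul_inv]

/-- Dominated convergence for the Riesz kernel slope. -/
lemma tendsto_int_aux (f : ℝ → ℝ) (hf : Continuous f) (c C : ℝ) (hc : 0 < c)
    (hfc : ∀ x, c ≤ f x) (hfC : ∀ x, f x ≤ C) :
    Tendsto (fun s : ℝ => ∫ φ in (0:ℝ)..(2*Real.pi), (f φ ^ (-(s/2)) - 1) / s)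
      (nhdsWithin 0 (Set.Ioi 0))
      (nhds (∫ φ in (0:ℝ)..(2*Real.pi), -(Real.log (f φ))/2)) := by
  have hfpos : ∀ x, 0 < f x := fun x => lt_of_lt_of_le hc (hfc x)
  set M := max |Real.log c| |Real.log C| with hM
  have hM0 : 0 ≤ M := le_trans (abs_nonneg _) (le_max_left _ _)
  have hlogbd : ∀ x, |Real.log (f x)| ≤ M := by
    intro x
    rw [abs_le]
    constructor
    · have h1 : Real.log c ≤ Real.log (f x) := Real.log_le_log hc (hfc x)
      have h2 : -M ≤ -|Real.log c| := by simp [hM, le_max_left]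
      have := neg_abs_le (Real.log c)
      linarith
    · have h1 : Real.log (f x) ≤ Real.log C := Real.log_le_log (hfpos x) (hfC x)
      have := le_abs_self (Real.log C)
      have h2 : |Real.log C| ≤ M := le_max_right _ _
      linarith
  apply intervalIntegral.tendsto_integral_filter_of_dominated_convergence
    (bound := fun _ => M)
  · filter_upwards with s
    apply Continuous.aestronglyMeasurable
    apply Continuous.div_const
    apply Continuous.sub _ continuous_const
    exact hf.rpow_const (fun x => Or.inl (ne_of_gt (hfpos x)))
  · have hmem : Set.Ioo (0:ℝ) (2/(M+1)) ∈ nhdsWithin 0 (Set.Ioi 0) :=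
      Ioo_mem_nhdsGT_of_mem (by constructor <;> [rfl; positivity])
    filter_upwards [hmem] with s hs
    filter_upwards with x _
    have hs0 : 0 < s := hs.1
    have hs2 : s < 2/(M+1) := hs.2
    have hrw : f x ^ (-(s/2)) = Real.exp (s * (-(Real.log (f x))/2)) := by
      rw [Real.rpow_def_of_pos (hfpos x)]
      congr 1
      ring
    have ht : |s * (-(Real.log (f x))/2)| ≤ 1 := by
      rw [abs_mul, abs_of_pos hs0]
      have h1 : |(-(Real.log (f x))/2)| ≤ M/2 := by
        rw [abs_div, abs_neg, abs_two]
        linarith [hlogbd x]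
      have : s * |(-(Real.log (f x))/2)| ≤ s * (M/2) :=
        mul_le_mul_of_nonneg_left h1 (le_of_lt hs0)
      have h3 : s * (M/2) ≤ 1 := by
        rw [lt_div_iff₀ (by positivity : (0:ℝ) < M+1)] at hs2
        nlinarith
      linarith
    have := Real.abs_exp_sub_one_le ht
    rw [Real.norm_eq_abs, hrw, abs_div, abs_of_pos hs0, div_le_iff₀ hs0]
    calc |Real.exp (s * (-(Real.log (f x))/2)) - 1|
        ≤ 2 * |s * (-(Real.log (f x))/2)| := this
      _ = s * |(-(Real.log (f x)))| / 2 * 2 := by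
          rw [abs_mul, abs_of_pos hs0, abs_div, abs_two]; ring
      _ ≤ M * s := by
          rw [abs_neg]
          have := hlogbd x
          nlinarith
  · exact intervalIntegrable_const
  · filter_upwards with x _
    have hrw : ∀ s : ℝ, (f x ^ (-(s/2)) - 1) / s
        = (Real.exp (s * (-(Real.log (f x))/2)) - 1) / s := by
      intro s
      rw [Real.rpow_def_of_pos (hfpos x)]
      congr 2
      ring
    simp_rw [hrw]
    exact exp_slope_tendsto (-(Real.log (f x))/2)

/-- Logarithmic limit: for fixed `z ≠ w` in the closed right half-plane,
`(K_s(z,w) - 1)/s → log(2/(|z-w| + |z-w*|))` as `s → 0⁺`, where `w* = -conj w`. -/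
theorem rotKernel_log_limit (z w : ℂ) (hz : 0 ≤ z.re) (hw : 0 ≤ w.re) (hzw : z ≠ w) :
    Tendsto (fun s : ℝ => (rotKernel s z w - 1) / s) (nhdsWithin 0 (Set.Ioi 0))
      (nhds (Real.log (2 /
        (‖z - w‖ + ‖z - -(starRingEnd ℂ w)‖)))) := by
  set a := ‖z - w‖ with haDef
  set b := ‖z - -(starRingEnd ℂ w)‖ with hbDef
  set f : ℝ → ℝ := fun φ =>
    z.re ^ 2 + w.re ^ 2 - 2 * z.re * w.re * Real.cos φ + (z.im - w.im) ^ 2 with hfDef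
  have ha2 : a^2 = (z.re - w.re)^2 + (z.im - w.im)^2 := by
    rw [haDef, Complex.sq_norm, Complex.normSq_apply]
    simp [Complex.sub_re, Complex.sub_im]
    ring
  have hb2 : b^2 = (z.re + w.re)^2 + (z.im - w.im)^2 := by
    rw [hbDef, Complex.sq_norm, Complex.normSq_apply]
    simp [Complex.sub_re, Complex.sub_im, Complex.neg_re, Complex.neg_im,
      Complex.conj_re, Complex.conj_im]
    ring
  have ha : 0 < a := norm_pos_iff.mpr (sub_ne_zero.mpr hzw)
  have hb0 : 0 ≤ b := norm_nonneg _
  have hxu : 0 ≤ z.re * w.re := mul_nonneg hz hw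
  have hab : a ≤ b := by nlinarith
  have hfc : ∀ φ, a^2 ≤ f φ := by
    intro φ
    rw [ha2, hfDef]
    beta_reduce
    have := Real.cos_le_one φ
    nlinarith
  have hfC : ∀ φ, f φ ≤ b^2 := by
    intro φ
    rw [hb2, hfDef]
    beta_reduce
    have := Real.neg_one_le_cos φ
    nlinarith
  have hfcont : Continuous f := by rw [hfDef]; continuity
  have hfpos : ∀ φ, 0 < f φ := fun φ => lt_of_lt_of_le (by positivity) (hfc φ)
  have hkey : ∀ φ : ℝ, f φ = (a^2+b^2)/2 - (b^2-a^2)/2 * Real.cos φ := by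
    intro φ
    rw [hfDef, ha2, hb2]
    ring
  -- value of the limit integral
  have hval : (1/(2*Real.pi)) * (∫ φ in (0:ℝ)..(2*Real.pi), -(Real.log (f φ))/2)
      = Real.log (2/(a+b)) := by
    have h1 : (∫ φ in (0:ℝ)..(2*Real.pi), -(Real.log (f φ))/2)
        = (-(∫ φ in (0:ℝ)..(2*Real.pi), Real.log (f φ)))/2 := by
      rw [intervalIntegral.integral_div, intervalIntegral.integral_neg]
    have h2 : (∫ φ in (0:ℝ)..(2*Real.pi), Real.log (f φ))
        = 4*Real.pi*Real.log ((a+b)/2) := by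
      simp_rw [hkey]
      exact logInt a b ha hab
    rw [h1, h2]
    rw [show (2:ℝ)/(a+b) = ((a+b)/2)⁻¹ by rw [inv_div], Real.log_inv]
    field_simp
    ring
  have hT := (tendsto_int_aux f hfcont (a^2) (b^2) (by positivity) hfc hfC).const_mul
    (1/(2*Real.pi))
  rw [hval] at hT
  apply hT.congr'
  filter_upwards [self_mem_nhdsWithin] with s hs
  have hs0 : (0:ℝ) < s := hs
  have hint : IntervalIntegrable (fun φ => f φ ^ (-(s/2))) MeasureTheory.volume 0 (2*Real.pi) := by
    apply Continuous.intervalIntegrable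
    exact hfcont.rpow_const (fun x => Or.inl (ne_of_gt (hfpos x)))
  have hsplit : (∫ φ in (0:ℝ)..(2*Real.pi), (f φ ^ (-(s/2)) - 1))
      = (∫ φ in (0:ℝ)..(2*Real.pi), f φ ^ (-(s/2))) - 2*Real.pi := by
    rw [intervalIntegral.integral_sub hint intervalIntegrable_const,
      intervalIntegral.integral_const]
    simp
  have hdiv : (∫ φ in (0:ℝ)..(2*Real.pi), (f φ ^ (-(s/2)) - 1)/s)
      = ((∫ φ in (0:ℝ)..(2*Real.pi), f φ ^ (-(s/2))) - 2*Real.pi)/s := by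
    rw [intervalIntegral.integral_div, hsplit]
  rw [hdiv]
  rw [show rotKernel s z w = (1 / (2 * Real.pi)) * ∫ φ in (0:ℝ)..(2 * Real.pi),
      f φ ^ (-(s/2)) from rfl]
  have hpi : Real.pi ≠ 0 := Real.pi_ne_zero
  field_simp
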